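/- arXiv:math/0501156 — 2 statements merged into one kernel-verified Lean document; each statement's English description precedes it below -/
import Mathlib

section
/- In Γ_N = S_N ⋉ Γ^N with N ≥ 2, all symplectic reflections of type (S), i.e. the elements s_{ij} γ_i γ_j^{-1} with i ≠ j and γ ∈ Γ, form a single conjugacy class of Γ_N. -/
noncomputable section

/-- The permutation action of `S_N` on `Γ^N`, as a homomorphism to the automorphism group. -/
def permAut (Γ : Type*) [Group Γ] (N : ℕ) :
    Equiv.Perm (Fin N) →* MulAut (Fin N → Γ) where
  toFun σ :=
    { toFun := fun f => f ∘ ⇑σ⁻¹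
      invFun := fun f => f ∘ ⇑σ
      left_inv := fun f => by funext i; simp
      right_inv := fun f => by funext i; simp
      map_mul' := fun f g => rfl }
  map_one' := by
    apply MulEquiv.ext; intro f; funext i; simp
  map_mul' σ τ := by
    apply MulEquiv.ext; intro f; funext i
    simp [mul_inv_rev, Equiv.Perm.mul_apply]

/-- The wreath product `Γ_N = S_N ⋉ Γ^N`. -/
def WreathProduct (Γ : Type*) [Group Γ] (N : ℕ) : Type _ :=
  SemidirectProduct (Fin N → Γ) (Equiv.Perm (Fin N)) (permAut Γ N)

instance (Γ : Type*) [Group Γ] (N : ℕ) : Group (WreathProduct Γ N) :=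
  SemidirectProduct.instGroup

/-- The symplectic reflection of type (S): the element `s_{ij} γ_i γ_j⁻¹` of `Γ_N`. -/
def typeS {Γ : Type*} [Group Γ] {N : ℕ} (i j : Fin N) (γ : Γ) : WreathProduct Γ N :=
  ⟨fun l => if l = i then γ else if l = j then γ⁻¹ else 1, Equiv.swap i j⟩

end

lemma wp_mul {Γ : Type*} [Group Γ] {N : ℕ} (f g : Fin N → Γ) (σ τ : Equiv.Perm (Fin N)) :
    ((⟨f, σ⟩ : WreathProduct Γ N) * ⟨g, τ⟩) = ⟨f * (permAut Γ N σ) g, σ * τ⟩ := rfl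

lemma wp_ext {Γ : Type*} [Group Γ] {N : ℕ} (f g : Fin N → Γ) (σ τ : Equiv.Perm (Fin N))
    (h1 : f = g) (h2 : σ = τ) : ((⟨f, σ⟩ : WreathProduct Γ N) = ⟨g, τ⟩) := by
  subst h1; subst h2; rfl

lemma conjA {Γ : Type*} [Group Γ] {N : ℕ} (σ : Equiv.Perm (Fin N)) (i j : Fin N) (γ : Γ) :
    IsConj (typeS i j γ : WreathProduct Γ N) (typeS (σ i) (σ j) γ) := by
  rw [isConj_iff]
  refine ⟨(⟨1, σ⟩ : WreathProduct Γ N), ?_⟩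
  apply mul_inv_eq_iff_eq_mul.mpr
  unfold typeS
  erw [wp_mul, wp_mul]
  refine wp_ext _ _ _ _ ?_ ?_
  · rw [map_one, one_mul, mul_one]
    funext l
    show (if σ⁻¹ l = i then γ else if σ⁻¹ l = j then γ⁻¹ else 1) = _
    simp [Equiv.Perm.inv_eq_iff_eq, Equiv.symm_apply_eq]
  · rw [Equiv.swap_apply_apply]
    group

lemma conjB {Γ : Type*} [Group Γ] {N : ℕ} (i j : Fin N) (hij : i ≠ j) (γ γ' : Γ) :
    IsConj (typeS i j γ : WreathProduct Γ N) (typeS i j γ') := by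
  rw [isConj_iff]
  refine ⟨(⟨fun l => if l = i then γ' * γ⁻¹ else 1, 1⟩ : WreathProduct Γ N), ?_⟩
  apply mul_inv_eq_iff_eq_mul.mpr
  unfold typeS
  erw [wp_mul, wp_mul]
  refine wp_ext _ _ _ _ ?_ ?_
  · rw [map_one]
    funext l
    show (if l = i then γ' * γ⁻¹ else 1) * (if l = i then γ else if l = j then γ⁻¹ else 1)
      = (if l = i then γ' else if l = j then γ'⁻¹ else 1) *
          (if Equiv.swap i j l = i then γ' * γ⁻¹ else 1)
    rcases eq_or_ne l i with rfl | hli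
    · simp [hij, hij.symm, Equiv.swap_apply_left]
    · rcases eq_or_ne l j with rfl | hlj
      · simp [hli, Equiv.swap_apply_right, hij]
      · simp [hli, hlj, Equiv.swap_apply_of_ne_of_ne hli hlj]
  · group

/-- In `Γ_N = S_N ⋉ Γ^N` (`Γ` a finite subgroup of `SL(2,ℂ)`) with `N ≥ 2`, all symplectic
reflections of type (S), i.e. the elements `s_{ij} γ_i γ_j⁻¹` with `i ≠ j` and `γ ∈ Γ`,
form a single conjugacy class of `Γ_N`. -/
theorem typeS_single_conjugacy_class {N : ℕ} (hN : 2 ≤ N)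
    (Γ : Subgroup (Matrix.SpecialLinearGroup (Fin 2) ℂ)) (hΓ : Finite Γ)
    (i j i' j' : Fin N) (γ γ' : Γ) (hij : i ≠ j) (hij' : i' ≠ j') :
    IsConj (typeS i j γ) (typeS i' j' γ') := by
  have h1 : IsConj (typeS i j γ) (typeS i j γ' : WreathProduct Γ N) := conjB i j hij γ γ'
  set j₁ : Fin N := Equiv.swap i i' j with hj₁
  have hj₁i' : j₁ ≠ i' := by
    rcases eq_or_ne j i' with h | h
    · have : j₁ = i := by rw [hj₁, h, Equiv.swap_apply_right]
      rw [this]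
      exact fun hc => hij (hc ▸ h.symm ▸ rfl)
    · rcases eq_or_ne j i with h' | h'
      · exact absurd h'.symm hij
      · rw [hj₁, Equiv.swap_apply_of_ne_of_ne h' h]; exact h
  set σ : Equiv.Perm (Fin N) := Equiv.swap j₁ j' * Equiv.swap i i' with hσ
  have hσi : σ i = i' := by
    rw [hσ, Equiv.Perm.mul_apply, Equiv.swap_apply_left,
      Equiv.swap_apply_of_ne_of_ne hj₁i'.symm hij']
  have hσj : σ j = j' := by
    rw [hσ, Equiv.Perm.mul_apply, ← hj₁, Equiv.swap_apply_left]
  have h2 : IsConj (typeS i j γ' : WreathProduct Γ N) (typeS i' j' γ') := by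
    have := conjA σ i j γ'
    rwa [hσi, hσj] at this
  exact h1.trans h2
end

section
/- Let W_1 be the irreducible representation of S_{N_1} whose Young diagram is an l_1 × m_1 rectangle (N_1 = l_1 m_1), Y_1 a finite-dimensional Γ-representation, and j ∈ {2,...,N_1}. Then Tr_{W_1 ⊗ Y_1^{⊗N_1}}(s_{1j} γ_1 γ_j^{-1}) = ((m_1 - l_1)/(N_1 - 1)) · dim W_1 · (dim Y_1)^{N_1 - 1} for every γ ∈ Γ. -/
open scoped TensorProduct
open Equiv

noncomputable section

/-- The row stabilizer of (the canonical tableau on) a Young diagram: permutations of the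
cells preserving each row. -/
def rowGroup (μ : YoungDiagram) : Subgroup (Equiv.Perm μ.cells) where
  carrier := {σ | ∀ c : μ.cells, ((σ c : ℕ × ℕ)).1 = (c : ℕ × ℕ).1}
  one_mem' := fun _ => rfl
  mul_mem' := by
    intro σ τ hσ hτ c
    simp only [Equiv.Perm.mul_apply]
    rw [hσ, hτ]
  inv_mem' := by
    intro σ hσ c
    have := hσ (σ⁻¹ c)
    simpa using this.symm

/-- The column stabilizer: permutations of the cells preserving each column. -/
def colGroup (μ : YoungDiagram) : Subgroup (Equiv.Perm μ.cells) where
  carrier := {σ | ∀ c : μ.cells, ((σ c : ℕ × ℕ)).2 = (c : ℕ × ℕ).2}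
  one_mem' := fun _ => rfl
  mul_mem' := by
    intro σ τ hσ hτ c
    simp only [Equiv.Perm.mul_apply]
    rw [hσ, hτ]
  inv_mem' := by
    intro σ hσ c
    have := hσ (σ⁻¹ c)
    simpa using this.symm

open scoped Classical in
/-- The Young symmetrizer of (the canonical tableau on) a Young diagram `μ`, as an element
of the group algebra `ℂ[S_{cells μ}]`. -/
def youngSymmetrizer (μ : YoungDiagram) : MonoidAlgebra ℂ (Equiv.Perm μ.cells) :=
  (∑ σ : rowGroup μ, MonoidAlgebra.single (σ : Equiv.Perm μ.cells) (1 : ℂ)) *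
    (∑ σ : colGroup μ,
      MonoidAlgebra.single (σ : Equiv.Perm μ.cells)
        ((Equiv.Perm.sign (σ : Equiv.Perm μ.cells) : ℤ) : ℂ))

/-- The Specht module `π_μ`: the left ideal of the group algebra generated by the Young
symmetrizer, realizing the irreducible representation of the symmetric group attached
to the Young diagram `μ`. -/
def spechtIdeal (μ : YoungDiagram) :
    Submodule (MonoidAlgebra ℂ (Equiv.Perm μ.cells)) (MonoidAlgebra ℂ (Equiv.Perm μ.cells)) :=
  Submodule.span _ {youngSymmetrizer μ}

/-- The Specht module viewed as a complex vector space. -/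
def spechtSubspace (μ : YoungDiagram) : Submodule ℂ (MonoidAlgebra ℂ (Equiv.Perm μ.cells)) :=
  (spechtIdeal μ).restrictScalars ℂ

/-- The action of a permutation `g` on the Specht module, by left multiplication. -/
def spechtAction (μ : YoungDiagram) (g : Equiv.Perm μ.cells) :
    spechtSubspace μ →ₗ[ℂ] spechtSubspace μ where
  toFun x := ⟨MonoidAlgebra.single g (1 : ℂ) * x.1, by
    have h := (spechtIdeal μ).smul_mem (MonoidAlgebra.single g (1 : ℂ)) x.2
    simpa [smul_eq_mul, spechtSubspace] using h⟩
  map_add' x y := Subtype.ext (by simp [mul_add])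
  map_smul' a x := Subtype.ext (by simp [mul_smul_comm])

/-- The Specht module as a representation of the symmetric group on the cells of `μ`. -/
def spechtRep (μ : YoungDiagram) :
    Representation ℂ (Equiv.Perm μ.cells) (spechtSubspace μ) where
  toFun := spechtAction μ
  map_one' := by
    apply LinearMap.ext; intro x
    refine Subtype.ext ?_
    show MonoidAlgebra.single (1 : Equiv.Perm μ.cells) (1 : ℂ) * x.1 = x.1
    rw [← MonoidAlgebra.one_def, one_mul]
  map_mul' g h := by
    apply LinearMap.ext; intro x
    refine Subtype.ext ?_
    show MonoidAlgebra.single (g * h) (1 : ℂ) * x.1 =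
      MonoidAlgebra.single g (1 : ℂ) * (MonoidAlgebra.single h (1 : ℂ) * x.1)
    rw [← mul_assoc, MonoidAlgebra.single_mul_single, mul_one]

/-- The zero-sum subspace of functions on the cells of `μ`: the reflection representation. -/
def reflSubspace (μ : YoungDiagram) : Submodule ℂ (μ.cells → ℂ) where
  carrier := {f | ∑ c, f c = 0}
  add_mem' := by
    intro f g hf hg
    have hf' : ∑ c, f c = 0 := hf
    have hg' : ∑ c, g c = 0 := hg
    show ∑ c, (f c + g c) = 0
    rw [Finset.sum_add_distrib, hf', hg', add_zero]
  zero_mem' := by simp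
  smul_mem' := by
    intro a f hf
    have hf' : ∑ c, f c = 0 := hf
    show ∑ c, a * f c = 0
    rw [← Finset.mul_sum, hf', mul_zero]

/-- The reflection representation of the symmetric group on the cells of `μ`. -/
def reflRep (μ : YoungDiagram) :
    Representation ℂ (Equiv.Perm μ.cells) (reflSubspace μ) where
  toFun σ :=
    { toFun := fun f => ⟨fun c => f.1 (σ⁻¹ c), by
        have h : ∑ c, f.1 (σ⁻¹ c) = ∑ c, f.1 c := Equiv.sum_comp σ⁻¹ f.1
        have h2 : ∑ c, f.1 c = 0 := f.2
        show ∑ c, f.1 (σ⁻¹ c) = 0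
        rw [h, h2]⟩
      map_add' := fun f g => rfl
      map_smul' := fun a f => rfl }
  map_one' := by
    apply LinearMap.ext; intro f
    exact Subtype.ext (by simp)
  map_mul' g h := by
    apply LinearMap.ext; intro f
    exact Subtype.ext (by funext c; simp [Equiv.Perm.mul_apply])

/-- The space of `G`-equivariant linear maps between two representations. -/
def equivariantHoms {k G V W : Type*} [CommSemiring k] [Monoid G]
    [AddCommMonoid V] [Module k V] [AddCommMonoid W] [Module k W]
    (ρ : Representation k G V) (τ : Representation k G W) :
    Submodule k (V →ₗ[k] W) where
  carrier := {f | ∀ g : G, f ∘ₗ ρ g = τ g ∘ₗ f}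
  add_mem' := by
    intro f g hf hg x
    simp [LinearMap.add_comp, LinearMap.comp_add, hf x, hg x]
  zero_mem' := by intro g; simp
  smul_mem' := by
    intro a f hf g
    simp [LinearMap.smul_comp, LinearMap.comp_smul, hf g]

/-- The removable corners of a Young diagram: cells whose removal leaves a Young diagram. -/
def removableCorners (μ : YoungDiagram) : Finset (ℕ × ℕ) :=
  μ.cells.filter fun c => (c.1 + 1, c.2) ∉ μ ∧ (c.1, c.2 + 1) ∉ μ

end

/-- Isomorphism of representations. -/
def RepIso {k G V W : Type*} [CommSemiring k] [Monoid G]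
    [AddCommMonoid V] [Module k V] [AddCommMonoid W] [Module k W]
    (ρ : Representation k G V) (τ : Representation k G W) : Prop :=
  ∃ e : V ≃ₗ[k] W, ∀ (g : G) (v : V), e (ρ g v) = τ g (e v)

noncomputable section

open scoped TensorProduct

/-- The action of a wreath product element `(n, σ) ∈ S_ι ⋉ Γ^ι` on `W ⊗ Y^{⊗ι}`:
`σ` acts on `W` (through `ρW`) and permutes the tensor factors of `Y^{⊗ι}`, while
`n : ι → Γ` acts factorwise (through `ρY`). -/
def wreathTensorAction {Γ W Y ι : Type*} [Group Γ]
    [AddCommGroup W] [Module ℂ W] [AddCommGroup Y] [Module ℂ Y]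
    (ρW : Representation ℂ (Equiv.Perm ι) W) (ρY : Representation ℂ Γ Y)
    (n : ι → Γ) (σ : Equiv.Perm ι) :
    (W ⊗[ℂ] (⨂[ℂ] _l : ι, Y)) →ₗ[ℂ] (W ⊗[ℂ] (⨂[ℂ] _l : ι, Y)) :=
  TensorProduct.map (ρW σ)
    ((PiTensorProduct.map fun l => ρY (n l)) ∘ₗ
      (PiTensorProduct.reindex ℂ (fun _ : ι => Y) σ).toLinearMap)

end

open scoped Classical

namespace SpechtAux

variable {μ : YoungDiagram}

lemma cell_ext {x y : μ.cells} (h1 : (x : ℕ × ℕ).1 = (y : ℕ × ℕ).1)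
    (h2 : (x : ℕ × ℕ).2 = (y : ℕ × ℕ).2) : x = y :=
  Subtype.ext (Prod.ext h1 h2)

lemma swap_mem_rowGroup_iff {x y : μ.cells} (h : x ≠ y) :
    Equiv.swap x y ∈ rowGroup μ ↔ (x : ℕ × ℕ).1 = (y : ℕ × ℕ).1 := by
  constructor
  · intro hs
    have := hs x
    rw [Equiv.swap_apply_left] at this
    exact this.symm
  · intro hxy c
    rcases eq_or_ne c x with rfl | hcx
    · rw [Equiv.swap_apply_left, hxy]
    rcases eq_or_ne c y with rfl | hcy
    · rw [Equiv.swap_apply_right, hxy]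
    · rw [Equiv.swap_apply_of_ne_of_ne hcx hcy]

lemma swap_mem_colGroup_iff {x y : μ.cells} (h : x ≠ y) :
    Equiv.swap x y ∈ colGroup μ ↔ (x : ℕ × ℕ).2 = (y : ℕ × ℕ).2 := by
  constructor
  · intro hs
    have := hs x
    rw [Equiv.swap_apply_left] at this
    exact this.symm
  · intro hxy c
    rcases eq_or_ne c x with rfl | hcx
    · rw [Equiv.swap_apply_left, hxy]
    rcases eq_or_ne c y with rfl | hcy
    · rw [Equiv.swap_apply_right, hxy]
    · rw [Equiv.swap_apply_of_ne_of_ne hcx hcy]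

lemma row_col_eq_one {p : Equiv.Perm μ.cells} (hr : p ∈ rowGroup μ) (hc : p ∈ colGroup μ) :
    p = 1 :=
  Equiv.ext fun c => cell_ext (hr c) (hc c)

lemma factor_eq_swap {x y : μ.cells} (hxy : x ≠ y) {p q : Equiv.Perm μ.cells}
    (hp : p ∈ rowGroup μ) (hq : q ∈ colGroup μ) (h : p * q = Equiv.swap x y) :
    (p = Equiv.swap x y ∧ q = 1) ∨ (p = 1 ∧ q = Equiv.swap x y) := by
  have fix : ∀ u : μ.cells, u ≠ x → u ≠ y → q u = u := by
    intro u hux huy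
    have h1 : p (q u) = u := by
      rw [← Equiv.Perm.mul_apply, h, Equiv.swap_apply_of_ne_of_ne hux huy]
    refine cell_ext ?_ (hq u)
    calc ((q u : μ.cells) : ℕ × ℕ).1 = ((p (q u) : μ.cells) : ℕ × ℕ).1 := (hp (q u)).symm
      _ = (u : ℕ × ℕ).1 := by rw [h1]
  have hqx : q x = x ∨ q x = y := by
    by_contra hcon
    push_neg at hcon
    have := fix (q x) hcon.1 hcon.2
    exact hcon.1 (q.injective this)
  rcases hqx with hqx | hqx
  · left
    have hqy : q y = y := by
      by_contra hqy
      have hne : q y ≠ x := fun hc => hxy (q.injective (hc.trans hqx.symm)).symm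
      have := fix (q y) hne hqy
      exact hqy (q.injective this)
    have hq1 : q = 1 := by
      refine Equiv.ext fun c => ?_
      rcases eq_or_ne c x with rfl | hcx
      · exact hqx
      rcases eq_or_ne c y with rfl | hcy
      · exact hqy
      · exact fix c hcx hcy
    subst hq1
    rw [mul_one] at h
    exact ⟨h, rfl⟩
  · right
    have hqy : q y = x := by
      have hne : q y ≠ y := fun hc => hxy (q.injective (hqx.trans hc.symm))
      by_contra hqyx
      have := fix (q y) hqyx hne
      exact hne (q.injective this)
    have hq1 : q = Equiv.swap x y := by
      refine Equiv.ext fun c => ?_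
      rcases eq_or_ne c x with rfl | hcx
      · rw [Equiv.swap_apply_left, hqx]
      rcases eq_or_ne c y with rfl | hcy
      · rw [Equiv.swap_apply_right, hqy]
      · rw [Equiv.swap_apply_of_ne_of_ne hcx hcy, fix c hcx hcy]
    subst hq1
    have : p = 1 := by
      have := h
      rw [show Equiv.swap x y = 1 * Equiv.swap x y from (one_mul _).symm] at this
      exact mul_right_cancel this
    exact ⟨this, rfl⟩

lemma young_coeff (g : Equiv.Perm μ.cells) :
    (youngSymmetrizer μ).coeff g =
      ∑ σ : rowGroup μ, ∑ τ : colGroup μ,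
        if (σ : Equiv.Perm μ.cells) * (τ : Equiv.Perm μ.cells) = g
          then ((Equiv.Perm.sign (τ : Equiv.Perm μ.cells) : ℤ) : ℂ) else 0 := by
  rw [youngSymmetrizer, Finset.sum_mul_sum]
  simp only [MonoidAlgebra.single_mul_single, one_mul]
  rw [MonoidAlgebra.coeff_sum, Finset.sum_apply']
  refine Finset.sum_congr rfl fun σ _ => ?_
  rw [MonoidAlgebra.coeff_sum, Finset.sum_apply']
  exact Finset.sum_congr rfl fun τ _ => by rw [MonoidAlgebra.coeff_single]; exact Finsupp.single_apply

lemma double_ite_sum {A B : Type*} [Fintype A] [Fintype B] [DecidableEq A] [DecidableEq B]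
    (σ₀ : A) (τ₀ : B) (v : ℂ) (F : A → B → ℂ)
    (hF : ∀ σ τ, F σ τ = if σ = σ₀ ∧ τ = τ₀ then v else 0) :
    ∑ σ : A, ∑ τ : B, F σ τ = v := by
  simp only [hF, ite_and]
  rw [Finset.sum_eq_single σ₀ (fun σ _ hσ => by simp [if_neg hσ]) (by simp)]
  simp

lemma young_coeff_one : (youngSymmetrizer μ).coeff (1 : Equiv.Perm μ.cells) = 1 := by
  rw [young_coeff]
  refine double_ite_sum 1 1 1 _ fun σ τ => ?_
  by_cases hc : (σ : Equiv.Perm μ.cells) * (τ : Equiv.Perm μ.cells) = 1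
  · have hτr : (τ : Equiv.Perm μ.cells) ∈ rowGroup μ := by
      rw [(mul_eq_one_iff_inv_eq.mp hc).symm]
      exact (rowGroup μ).inv_mem σ.2
    have hτ1 : (τ : Equiv.Perm μ.cells) = 1 := row_col_eq_one hτr τ.2
    have hσ1 : (σ : Equiv.Perm μ.cells) = 1 := by
      rw [hτ1, mul_one] at hc
      exact hc
    rw [if_pos hc, if_pos ⟨Subtype.ext hσ1, Subtype.ext hτ1⟩, hτ1]
    simp
  · rw [if_neg hc, if_neg]
    rintro ⟨rfl, rfl⟩
    simp at hc

lemma young_coeff_swap {x y : μ.cells} (hxy : x ≠ y) :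
    (youngSymmetrizer μ).coeff (Equiv.swap x y) =
      (if (x : ℕ × ℕ).1 = (y : ℕ × ℕ).1 then 1 else 0)
        - (if (x : ℕ × ℕ).2 = (y : ℕ × ℕ).2 then 1 else 0) := by
  have hnb : ¬ ((x : ℕ × ℕ).1 = (y : ℕ × ℕ).1 ∧ (x : ℕ × ℕ).2 = (y : ℕ × ℕ).2) := by
    rintro ⟨h1, h2⟩
    exact hxy (cell_ext h1 h2)
  rw [young_coeff]
  by_cases hr : (x : ℕ × ℕ).1 = (y : ℕ × ℕ).1
  · have hc : ¬ (x : ℕ × ℕ).2 = (y : ℕ × ℕ).2 := fun h => hnb ⟨hr, h⟩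
    rw [if_pos hr, if_neg hc, sub_zero]
    have hsm : Equiv.swap x y ∈ rowGroup μ := (swap_mem_rowGroup_iff hxy).mpr hr
    refine double_ite_sum ⟨Equiv.swap x y, hsm⟩ 1 1 _ fun σ τ => ?_
    by_cases hcond : (σ : Equiv.Perm μ.cells) * (τ : Equiv.Perm μ.cells) = Equiv.swap x y
    · rcases factor_eq_swap hxy σ.2 τ.2 hcond with ⟨hp, hq⟩ | ⟨hp, hq⟩
      · rw [if_pos hcond, if_pos ⟨Subtype.ext hp, Subtype.ext hq⟩, hq]
        simp
      · exact absurd ((swap_mem_colGroup_iff hxy).mp (hq ▸ τ.2)) hc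
    · rw [if_neg hcond, if_neg]
      rintro ⟨rfl, rfl⟩
      simp at hcond
  · rw [if_neg hr, zero_sub]
    by_cases hc : (x : ℕ × ℕ).2 = (y : ℕ × ℕ).2
    · rw [if_pos hc]
      have hsm : Equiv.swap x y ∈ colGroup μ := (swap_mem_colGroup_iff hxy).mpr hc
      refine double_ite_sum 1 ⟨Equiv.swap x y, hsm⟩ (-1) _ fun σ τ => ?_
      by_cases hcond : (σ : Equiv.Perm μ.cells) * (τ : Equiv.Perm μ.cells) = Equiv.swap x y
      · rcases factor_eq_swap hxy σ.2 τ.2 hcond with ⟨hp, hq⟩ | ⟨hp, hq⟩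
        · exact absurd ((swap_mem_rowGroup_iff hxy).mp (hp ▸ σ.2)) hr
        · rw [if_pos hcond, if_pos ⟨Subtype.ext hp, Subtype.ext hq⟩, hq]
          rw [Equiv.Perm.sign_swap hxy]
          simp
      · rw [if_neg hcond, if_neg]
        rintro ⟨rfl, rfl⟩
        simp at hcond
    · rw [if_neg hc, neg_zero]
      refine Finset.sum_eq_zero fun σ _ => Finset.sum_eq_zero fun τ _ => ?_
      rw [if_neg]
      intro hcond
      rcases factor_eq_swap hxy σ.2 τ.2 hcond with ⟨hp, hq⟩ | ⟨hp, hq⟩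
      · exact hr ((swap_mem_rowGroup_iff hxy).mp (hp ▸ σ.2))
      · exact hc ((swap_mem_colGroup_iff hxy).mp (hq ▸ τ.2))

lemma single_mul_rowSum {p : Equiv.Perm μ.cells} (hp : p ∈ rowGroup μ) :
    MonoidAlgebra.single p (1 : ℂ) *
        (∑ σ : rowGroup μ, MonoidAlgebra.single (σ : Equiv.Perm μ.cells) (1 : ℂ)) =
      ∑ σ : rowGroup μ, MonoidAlgebra.single (σ : Equiv.Perm μ.cells) (1 : ℂ) := by
  rw [Finset.mul_sum]
  simp only [MonoidAlgebra.single_mul_single, one_mul]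
  exact Fintype.sum_equiv (Equiv.mulLeft (⟨p, hp⟩ : rowGroup μ)) _ _ (fun σ => rfl)

lemma colSum_mul_single {q : Equiv.Perm μ.cells} (hq : q ∈ colGroup μ) :
    (∑ σ : colGroup μ, MonoidAlgebra.single (σ : Equiv.Perm μ.cells)
        ((Equiv.Perm.sign (σ : Equiv.Perm μ.cells) : ℤ) : ℂ)) *
      MonoidAlgebra.single q (1 : ℂ) =
    ((Equiv.Perm.sign q : ℤ) : ℂ) •
      ∑ σ : colGroup μ, MonoidAlgebra.single (σ : Equiv.Perm μ.cells)
        ((Equiv.Perm.sign (σ : Equiv.Perm μ.cells) : ℤ) : ℂ) := by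
  rw [Finset.sum_mul, Finset.smul_sum]
  simp only [MonoidAlgebra.single_mul_single, mul_one, Finsupp.smul_single]
  refine Fintype.sum_equiv (Equiv.mulRight (⟨q, hq⟩ : colGroup μ)) _ _ (fun σ => ?_)
  show MonoidAlgebra.single ((σ : Equiv.Perm μ.cells) * q)
      ((Equiv.Perm.sign (σ : Equiv.Perm μ.cells) : ℤ) : ℂ) =
    ((Equiv.Perm.sign q : ℤ) : ℂ) • MonoidAlgebra.single ((σ : Equiv.Perm μ.cells) * q)
      ((Equiv.Perm.sign ((σ : Equiv.Perm μ.cells) * q) : ℤ) : ℂ)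
  rw [MonoidAlgebra.smul_single, smul_eq_mul, ← Int.cast_mul, ← Units.val_mul, map_mul]
  congr 2
  rw [mul_comm (Equiv.Perm.sign (σ : Equiv.Perm μ.cells)), ← mul_assoc, Int.units_mul_self,
    one_mul]

lemma young_conj_rel {p q : Equiv.Perm μ.cells} (hp : p ∈ rowGroup μ) (hq : q ∈ colGroup μ) :
    MonoidAlgebra.single p (1 : ℂ) * youngSymmetrizer μ * MonoidAlgebra.single q (1 : ℂ) =
      ((Equiv.Perm.sign q : ℤ) : ℂ) • youngSymmetrizer μ := by
  rw [youngSymmetrizer, ← mul_assoc, single_mul_rowSum hp, mul_assoc, colSum_mul_single hq,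
    mul_smul_comm]

lemma young_sq_conj_rel {p q : Equiv.Perm μ.cells} (hp : p ∈ rowGroup μ) (hq : q ∈ colGroup μ) :
    MonoidAlgebra.single p (1 : ℂ) * (youngSymmetrizer μ * youngSymmetrizer μ) *
        MonoidAlgebra.single q (1 : ℂ) =
      ((Equiv.Perm.sign q : ℤ) : ℂ) • (youngSymmetrizer μ * youngSymmetrizer μ) := by
  have h1 : MonoidAlgebra.single p (1 : ℂ) * youngSymmetrizer μ = youngSymmetrizer μ := by
    have := young_conj_rel (μ := μ) hp ((colGroup μ).one_mem)
    rw [← MonoidAlgebra.one_def, mul_one] at this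
    simpa using this
  have h2 : youngSymmetrizer μ * MonoidAlgebra.single q (1 : ℂ) =
      ((Equiv.Perm.sign q : ℤ) : ℂ) • youngSymmetrizer μ := by
    have := young_conj_rel (μ := μ) ((rowGroup μ).one_mem) hq
    rw [← MonoidAlgebra.one_def, one_mul] at this
    exact this
  rw [← mul_assoc, mul_assoc _ (youngSymmetrizer μ) (youngSymmetrizer μ), ← mul_assoc,
    h1, mul_assoc, h2, mul_smul_comm]

lemma coeff_rel {x : MonoidAlgebra ℂ (Equiv.Perm μ.cells)}
    (hx : ∀ p ∈ rowGroup μ, ∀ q ∈ colGroup μ,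
      MonoidAlgebra.single p (1 : ℂ) * x * MonoidAlgebra.single q (1 : ℂ) =
        ((Equiv.Perm.sign q : ℤ) : ℂ) • x)
    {p q : Equiv.Perm μ.cells} (hp : p ∈ rowGroup μ) (hq : q ∈ colGroup μ)
    (g : Equiv.Perm μ.cells) :
    x.coeff g = ((Equiv.Perm.sign q : ℤ) : ℂ) * x.coeff (p * g * q) := by
  have h := hx p hp q hq
  have h2 := congrArg (fun z : MonoidAlgebra ℂ (Equiv.Perm μ.cells) => z.coeff (p * g * q)) h
  rw [MonoidAlgebra.coeff_smul_apply, smul_eq_mul] at h2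
  rw [MonoidAlgebra.coeff_mul_single_apply, MonoidAlgebra.coeff_single_mul_apply] at h2
  rw [show p⁻¹ * (p * g * q * q⁻¹) = g by group] at h2
  rw [mul_one, one_mul] at h2
  rw [← h2]

lemma coeff_vanish {x : MonoidAlgebra ℂ (Equiv.Perm μ.cells)}
    (hx : ∀ p ∈ rowGroup μ, ∀ q ∈ colGroup μ,
      MonoidAlgebra.single p (1 : ℂ) * x * MonoidAlgebra.single q (1 : ℂ) =
        ((Equiv.Perm.sign q : ℤ) : ℂ) • x)
    {g : Equiv.Perm μ.cells} {u v : μ.cells} (huv : u ≠ v)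
    (hrow : (u : ℕ × ℕ).1 = (v : ℕ × ℕ).1)
    (hcol : ((g⁻¹ u : μ.cells) : ℕ × ℕ).2 = ((g⁻¹ v : μ.cells) : ℕ × ℕ).2) :
    x.coeff g = 0 := by
  set t : Equiv.Perm μ.cells := Equiv.swap u v with ht
  have htr : t ∈ rowGroup μ := (swap_mem_rowGroup_iff huv).mpr hrow
  have hg : g⁻¹ u ≠ g⁻¹ v := fun hc => huv (g⁻¹.injective hc)
  have hqc : g⁻¹ * t * g ∈ colGroup μ := by
    have : g⁻¹ * t * g = Equiv.swap (g⁻¹ u) (g⁻¹ v) := by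
      rw [ht, Equiv.swap_apply_apply]
      group
    rw [this]
    exact (swap_mem_colGroup_iff hg).mpr hcol
  have key := coeff_rel hx htr hqc g
  rw [show t * g * (g⁻¹ * t * g) = g by
    rw [show t * g * (g⁻¹ * t * g) = (t * t) * g by group, ht, Equiv.swap_mul_self, one_mul]]
    at key
  have hs : Equiv.Perm.sign (g⁻¹ * t * g) = -1 := by
    rw [map_mul, map_mul, map_inv, ht, Equiv.Perm.sign_swap huv]
    rcases Int.units_eq_one_or (Equiv.Perm.sign g) with h | h <;> rw [h] <;> rfl
  rw [hs] at key
  push_cast at key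
  linear_combination (1 / 2 : ℂ) * key

lemma rect_factor {l₁ m₁ : ℕ} (hμ : μ.cells = Finset.range l₁ ×ˢ Finset.range m₁)
    (g : Equiv.Perm μ.cells)
    (hno : ¬ ∃ u v : μ.cells, u ≠ v ∧ (u : ℕ × ℕ).1 = (v : ℕ × ℕ).1 ∧
      ((g⁻¹ u : μ.cells) : ℕ × ℕ).2 = ((g⁻¹ v : μ.cells) : ℕ × ℕ).2) :
    ∃ p ∈ rowGroup μ, ∃ q ∈ colGroup μ, g = p * q := by
  push_neg at hno
  have hinj : ∀ u v : μ.cells, (u : ℕ × ℕ).1 = (v : ℕ × ℕ).1 →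
      ((g⁻¹ u : μ.cells) : ℕ × ℕ).2 = ((g⁻¹ v : μ.cells) : ℕ × ℕ).2 → u = v := by
    intro u v h1 h2
    by_contra hne
    exact (hno u v hne h1) h2
  have hmem' : ∀ u : μ.cells, (u : ℕ × ℕ) ∈ Finset.range l₁ ×ˢ Finset.range m₁ := by
    intro u
    have h := u.2
    simp only [hμ] at h
    exact h
  have hcol : ∀ u : μ.cells, (u : ℕ × ℕ).2 ∈ Finset.range m₁ :=
    fun u => (Finset.mem_product.mp (hmem' u)).2
  have hrow : ∀ u : μ.cells, (u : ℕ × ℕ).1 ∈ Finset.range l₁ :=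
    fun u => (Finset.mem_product.mp (hmem' u)).1
  have hex : ∀ c : μ.cells, ∃ u : μ.cells, (u : ℕ × ℕ).1 = (c : ℕ × ℕ).1 ∧
      ((g⁻¹ u : μ.cells) : ℕ × ℕ).2 = (c : ℕ × ℕ).2 := by
    intro c
    set s : Finset μ.cells :=
      Finset.univ.filter (fun u : μ.cells => (u : ℕ × ℕ).1 = (c : ℕ × ℕ).1) with hs
    have hcard : s.card = m₁ := by
      rw [← Finset.card_range m₁]
      refine Finset.card_bij (fun u _ => (u : ℕ × ℕ).2) ?_ ?_ ?_
      · intro u hu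
        exact hcol u
      · intro u hu v hv h
        rw [hs, Finset.mem_filter] at hu hv
        exact cell_ext (hu.2.trans hv.2.symm) h
      · intro j hj
        have hmem : ((c : ℕ × ℕ).1, j) ∈ μ.cells := by
          simp only [hμ, Finset.mem_product]
          exact ⟨hrow c, hj⟩
        exact ⟨⟨_, hmem⟩, by rw [hs, Finset.mem_filter]; exact ⟨Finset.mem_univ _, rfl⟩, rfl⟩
    have hsurj := Finset.surj_on_of_inj_on_of_card_le
      (s := s) (t := Finset.range m₁)
      (fun u _ => ((g⁻¹ u : μ.cells) : ℕ × ℕ).2)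
      (fun u _ => hcol _)
      (fun u v hu hv h => by
        rw [hs, Finset.mem_filter] at hu hv
        exact hinj u v (hu.2.trans hv.2.symm) h)
      (by rw [hcard, Finset.card_range])
    obtain ⟨u, hu, hu2⟩ := hsurj (c : ℕ × ℕ).2 (hcol c)
    rw [hs, Finset.mem_filter] at hu
    exact ⟨u, hu.2, hu2.symm⟩
  choose φ hφ1 hφ2 using hex
  have hinjφ : Function.Injective φ := by
    intro c d h
    refine cell_ext ?_ ?_
    · rw [← hφ1 c, ← hφ1 d, h]
    · rw [← hφ2 c, ← hφ2 d, h]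
  let p : Equiv.Perm μ.cells := Equiv.ofBijective φ (Finite.injective_iff_bijective.mp hinjφ)
  have hpapp : ∀ c, p c = φ c := fun c => rfl
  have hpmem : p ∈ rowGroup μ := by
    intro c
    rw [hpapp]
    exact hφ1 c
  have hqmem : g⁻¹ * p ∈ colGroup μ := by
    intro c
    rw [Equiv.Perm.mul_apply, hpapp]
    exact hφ2 c
  exact ⟨p, hpmem, (g⁻¹ * p)⁻¹, (colGroup μ).inv_mem hqmem, by group⟩

lemma young_sq {l₁ m₁ : ℕ} (hμ : μ.cells = Finset.range l₁ ×ˢ Finset.range m₁) :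
    youngSymmetrizer μ * youngSymmetrizer μ =
      ((youngSymmetrizer μ * youngSymmetrizer μ).coeff (1 : Equiv.Perm μ.cells)) •
        youngSymmetrizer μ := by
  refine MonoidAlgebra.coeff_injective (Finsupp.ext fun g => ?_)
  rw [MonoidAlgebra.coeff_smul_apply, smul_eq_mul]
  by_cases hno : ∃ u v : μ.cells, u ≠ v ∧ (u : ℕ × ℕ).1 = (v : ℕ × ℕ).1 ∧
      ((g⁻¹ u : μ.cells) : ℕ × ℕ).2 = ((g⁻¹ v : μ.cells) : ℕ × ℕ).2
  · obtain ⟨u, v, huv, h1, h2⟩ := hno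
    rw [coeff_vanish (fun p hp q hq => young_sq_conj_rel hp hq) huv h1 h2,
      coeff_vanish (fun p hp q hq => young_conj_rel hp hq) huv h1 h2, mul_zero]
  · obtain ⟨p, hp, q, hq, rfl⟩ := rect_factor hμ g hno
    have e1 := coeff_rel (fun p hp q hq => young_sq_conj_rel hp hq) hp hq 1
    have e2 := coeff_rel (fun p hp q hq => young_conj_rel hp hq) hp hq 1
    rw [mul_one] at e1 e2
    rw [young_coeff_one] at e2
    have hsq : ((Equiv.Perm.sign q : ℤ) : ℂ) * ((Equiv.Perm.sign q : ℤ) : ℂ) = 1 := by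
      rw [← Int.cast_mul, ← Units.val_mul, Int.units_mul_self]
      norm_num
    have hc : (youngSymmetrizer μ).coeff (p * q) = ((Equiv.Perm.sign q : ℤ) : ℂ) := by
      linear_combination (-((Equiv.Perm.sign q : ℤ) : ℂ)) * e2
        - ((youngSymmetrizer μ).coeff (p * q)) * hsq
    have hcc : (youngSymmetrizer μ * youngSymmetrizer μ).coeff (p * q) =
        ((Equiv.Perm.sign q : ℤ) : ℂ) * (youngSymmetrizer μ * youngSymmetrizer μ).coeff 1 := by
      linear_combination (-((Equiv.Perm.sign q : ℤ) : ℂ)) * e1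
        - ((youngSymmetrizer μ * youngSymmetrizer μ).coeff (p * q)) * hsq
    rw [hcc, hc]
    ring

instance {G : Type*} [Group G] [Fintype G] : Module.Finite ℂ (MonoidAlgebra ℂ G) :=
  Module.Finite.equiv ((Finsupp.linearEquivFunOnFinite ℂ ℂ G : (G →₀ ℂ) ≃ₗ[ℂ] (G → ℂ)).symm.trans
    (MonoidAlgebra.coeffLinearEquiv ℂ).symm)

lemma trace_monoidAlgebra {G : Type*} [Group G] [Fintype G]
    (f : MonoidAlgebra ℂ G →ₗ[ℂ] MonoidAlgebra ℂ G) :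
    LinearMap.trace ℂ _ f = ∑ h : G, (f (MonoidAlgebra.single h 1)).coeff h := by
  have h1 := LinearMap.trace_eq_matrix_trace ℂ (MonoidAlgebra.basis G ℂ) f
  refine h1.trans ?_
  rw [Matrix.trace]
  refine Finset.sum_congr rfl fun h _ => ?_
  rw [Matrix.diag_apply, LinearMap.toMatrix_apply]
  rfl

lemma trace_LR {G : Type*} [Group G] [Fintype G] (g : G) (c' : MonoidAlgebra ℂ G) :
    LinearMap.trace ℂ _
        (LinearMap.mulLeft ℂ (MonoidAlgebra.single g (1 : ℂ)) ∘ₗ LinearMap.mulRight ℂ c') =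
      ∑ h : G, c'.coeff (h⁻¹ * g⁻¹ * h) := by
  rw [trace_monoidAlgebra]
  refine Finset.sum_congr rfl fun h _ => ?_
  rw [LinearMap.comp_apply, LinearMap.mulRight_apply, LinearMap.mulLeft_apply]
  rw [MonoidAlgebra.coeff_single_mul_apply, MonoidAlgebra.coeff_single_mul_apply, one_mul, one_mul,
    ← mul_assoc]

lemma spechtSubspace_eq_range :
    spechtSubspace μ = LinearMap.range (LinearMap.mulRight ℂ (youngSymmetrizer μ)) := by
  ext x
  rw [spechtSubspace, Submodule.restrictScalars_mem, spechtIdeal, Submodule.mem_span_singleton]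
  constructor
  · rintro ⟨a, rfl⟩
    exact ⟨a, by rw [LinearMap.mulRight_apply, smul_eq_mul]⟩
  · rintro ⟨a, rfl⟩
    exact ⟨a, by rw [LinearMap.mulRight_apply, smul_eq_mul]⟩

lemma young_kappa_ne {l₁ m₁ : ℕ} (hμ : μ.cells = Finset.range l₁ ×ˢ Finset.range m₁) :
    (youngSymmetrizer μ * youngSymmetrizer μ).coeff (1 : Equiv.Perm μ.cells) ≠ 0 := by
  intro h0
  have hcc : youngSymmetrizer μ * youngSymmetrizer μ = 0 := by
    rw [young_sq hμ, h0, zero_smul]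
  have hnil : IsNilpotent (LinearMap.mulRight ℂ (youngSymmetrizer μ)) := by
    refine ⟨2, ?_⟩
    rw [pow_two]
    refine LinearMap.ext fun x => ?_
    rw [Module.End.mul_apply, LinearMap.mulRight_apply, LinearMap.mulRight_apply, mul_assoc,
      hcc, mul_zero, LinearMap.zero_apply]
  have htr := (LinearMap.isNilpotent_trace_of_isNilpotent hnil).eq_zero
  rw [trace_monoidAlgebra] at htr
  have : ∀ h : Equiv.Perm μ.cells,
      (MonoidAlgebra.single h (1 : ℂ) * youngSymmetrizer μ).coeff h = 1 := by
    intro h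
    rw [MonoidAlgebra.coeff_single_mul_apply, one_mul, inv_mul_cancel, young_coeff_one]
  simp only [LinearMap.mulRight_apply] at htr
  rw [Finset.sum_congr rfl fun h _ => this h] at htr
  simp at htr

lemma trace_spechtAction {l₁ m₁ : ℕ} (hμ : μ.cells = Finset.range l₁ ×ˢ Finset.range m₁)
    (g : Equiv.Perm μ.cells) :
    LinearMap.trace ℂ (spechtSubspace μ) (spechtAction μ g) =
      ((youngSymmetrizer μ * youngSymmetrizer μ).coeff (1 : Equiv.Perm μ.cells))⁻¹ *
        ∑ h : Equiv.Perm μ.cells, (youngSymmetrizer μ).coeff (h⁻¹ * g⁻¹ * h) := by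
  set κ := (youngSymmetrizer μ * youngSymmetrizer μ).coeff (1 : Equiv.Perm μ.cells) with hκdef
  have hκ : κ ≠ 0 := young_kappa_ne hμ
  set F : MonoidAlgebra ℂ (Equiv.Perm μ.cells) →ₗ[ℂ] MonoidAlgebra ℂ (Equiv.Perm μ.cells) :=
    κ⁻¹ • (LinearMap.mulLeft ℂ (MonoidAlgebra.single g (1 : ℂ)) ∘ₗ LinearMap.mulRight ℂ (youngSymmetrizer μ))
      with hF
  have hmem : ∀ x, F x ∈ spechtSubspace μ := by
    intro x
    rw [spechtSubspace_eq_range]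
    refine ⟨κ⁻¹ • (MonoidAlgebra.single g (1 : ℂ) * x), ?_⟩
    rw [LinearMap.mulRight_apply, hF]
    simp only [LinearMap.smul_apply, LinearMap.comp_apply, LinearMap.mulRight_apply,
      LinearMap.mulLeft_apply]
    rw [smul_mul_assoc, mul_assoc]
  have hres := LinearMap.trace_restrict_eq_of_forall_mem (spechtSubspace μ) F hmem
    (fun x _ => hmem x)
  have heq : F.restrict (fun x _ => hmem x) = spechtAction μ g := by
    refine LinearMap.ext fun v => ?_
    rcases v with ⟨v, hv⟩
    have hv' := hv
    rw [spechtSubspace_eq_range] at hv'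
    obtain ⟨a, ha⟩ := hv'
    rw [LinearMap.mulRight_apply] at ha
    refine Subtype.ext ?_
    rw [LinearMap.restrict_apply]
    show F v = MonoidAlgebra.single g (1 : ℂ) * v
    rw [hF]
    simp only [LinearMap.smul_apply, LinearMap.comp_apply, LinearMap.mulRight_apply,
      LinearMap.mulLeft_apply]
    rw [← ha, mul_assoc a, young_sq hμ, ← hκdef]
    rw [mul_smul_comm, mul_smul_comm, smul_smul, inv_mul_cancel₀ hκ, one_smul]
  rw [← heq, hres, hF, map_smul, smul_eq_mul, trace_LR]

lemma exists_perm_two {α : Type*} [DecidableEq α] {a b x y : α} (hab : a ≠ b) (hxy : x ≠ y) :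
    ∃ σ : Equiv.Perm α, σ a = x ∧ σ b = y := by
  refine ⟨Equiv.swap (Equiv.swap a x b) y * Equiv.swap a x, ?_, ?_⟩
  · rw [Equiv.Perm.mul_apply, Equiv.swap_apply_left]
    have h1 : x ≠ Equiv.swap a x b := by
      intro hc
      exact hab (Equiv.injective _ ((Equiv.swap_apply_left a x).trans hc))
    exact Equiv.swap_apply_of_ne_of_ne h1 hxy
  · rw [Equiv.Perm.mul_apply, Equiv.swap_apply_left]

lemma fiber_card_const {a b : μ.cells} (hab : a ≠ b) {x y : μ.cells} (hxy : x ≠ y) :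
    (Finset.univ.filter fun h : Equiv.Perm μ.cells => h a = x ∧ h b = y).card =
      (Finset.univ.filter fun h : Equiv.Perm μ.cells => h a = a ∧ h b = b).card := by
  obtain ⟨σ, hσa, hσb⟩ := exists_perm_two hab hxy
  symm
  refine Finset.card_bij (fun h _ => σ * h) ?_ ?_ ?_
  · intro h hh
    rw [Finset.mem_filter] at hh ⊢
    refine ⟨Finset.mem_univ _, ?_, ?_⟩
    · rw [Equiv.Perm.mul_apply, hh.2.1, hσa]
    · rw [Equiv.Perm.mul_apply, hh.2.2, hσb]
  · intro h1 _ h2 _ h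
    exact mul_left_cancel h
  · intro k hk
    rw [Finset.mem_filter] at hk
    refine ⟨σ⁻¹ * k, ?_, by group⟩
    rw [Finset.mem_filter]
    refine ⟨Finset.mem_univ _, ?_, ?_⟩
    · rw [Equiv.Perm.mul_apply, hk.2.1, ← hσa]
      simp
    · rw [Equiv.Perm.mul_apply, hk.2.2, ← hσb]
      simp
variable (μ) in
def rowPairs : Finset (μ.cells × μ.cells) :=
  Finset.univ.offDiag.filter fun p => ((p.1 : ℕ × ℕ)).1 = ((p.2 : ℕ × ℕ)).1

variable (μ) in
def colPairs : Finset (μ.cells × μ.cells) :=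
  Finset.univ.offDiag.filter fun p => ((p.1 : ℕ × ℕ)).2 = ((p.2 : ℕ × ℕ)).2

lemma card_rowPairs {l₁ m₁ : ℕ} (hμ : μ.cells = Finset.range l₁ ×ˢ Finset.range m₁) :
    (rowPairs μ).card = l₁ * (m₁ * m₁ - m₁) := by
  have hmem' : ∀ u : μ.cells, (u : ℕ × ℕ) ∈ Finset.range l₁ ×ˢ Finset.range m₁ := by
    intro u
    have h := u.2
    simp only [hμ] at h
    exact h
  rw [show l₁ * (m₁ * m₁ - m₁) =
    ((Finset.range l₁) ×ˢ (Finset.range m₁).offDiag).card by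
      rw [Finset.card_product, Finset.card_range, Finset.offDiag_card, Finset.card_range]]
  refine Finset.card_bij
    (fun p _ => (((p.1 : ℕ × ℕ)).1, (((p.1 : ℕ × ℕ)).2, ((p.2 : ℕ × ℕ)).2))) ?_ ?_ ?_
  · intro p hp
    rw [rowPairs, Finset.mem_filter, Finset.mem_offDiag] at hp
    obtain ⟨⟨-, -, hne⟩, hrow⟩ := hp
    rw [Finset.mem_product, Finset.mem_offDiag]
    refine ⟨(Finset.mem_product.mp (hmem' p.1)).1,
      (Finset.mem_product.mp (hmem' p.1)).2, (Finset.mem_product.mp (hmem' p.2)).2, ?_⟩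
    intro hc
    exact hne (cell_ext hrow hc)
  · intro p hp p' hp' h
    rw [rowPairs, Finset.mem_filter, Finset.mem_offDiag] at hp hp'
    have e1 : ((p.1 : ℕ × ℕ)).1 = ((p'.1 : ℕ × ℕ)).1 := (Prod.ext_iff.mp h).1
    have e2 : ((p.1 : ℕ × ℕ)).2 = ((p'.1 : ℕ × ℕ)).2 :=
      (Prod.ext_iff.mp (Prod.ext_iff.mp h).2).1
    have e3 : ((p.2 : ℕ × ℕ)).2 = ((p'.2 : ℕ × ℕ)).2 :=
      (Prod.ext_iff.mp (Prod.ext_iff.mp h).2).2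
    exact Prod.ext (cell_ext e1 e2) (cell_ext (by rw [← hp.2, ← hp'.2, e1]) e3)
  · intro q hq
    rw [Finset.mem_product, Finset.mem_offDiag] at hq
    obtain ⟨hq1, hqu, hqv, hquv⟩ := hq
    have hmem1 : (q.1, q.2.1) ∈ μ.cells := by
      simp only [hμ, Finset.mem_product]
      exact ⟨hq1, hqu⟩
    have hmem2 : (q.1, q.2.2) ∈ μ.cells := by
      simp only [hμ, Finset.mem_product]
      exact ⟨hq1, hqv⟩
    refine ⟨(⟨_, hmem1⟩, ⟨_, hmem2⟩), ?_, rfl⟩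
    rw [rowPairs, Finset.mem_filter, Finset.mem_offDiag]
    exact ⟨⟨Finset.mem_univ _, Finset.mem_univ _, fun hc => hquv (congrArg
      (fun u : μ.cells => (u : ℕ × ℕ).2) hc)⟩, rfl⟩

lemma card_colPairs {l₁ m₁ : ℕ} (hμ : μ.cells = Finset.range l₁ ×ˢ Finset.range m₁) :
    (colPairs μ).card = m₁ * (l₁ * l₁ - l₁) := by
  have hmem' : ∀ u : μ.cells, (u : ℕ × ℕ) ∈ Finset.range l₁ ×ˢ Finset.range m₁ := by
    intro u
    have h := u.2
    simp only [hμ] at h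
    exact h
  rw [show m₁ * (l₁ * l₁ - l₁) =
    ((Finset.range m₁) ×ˢ (Finset.range l₁).offDiag).card by
      rw [Finset.card_product, Finset.card_range, Finset.offDiag_card, Finset.card_range]]
  refine Finset.card_bij
    (fun p _ => (((p.1 : ℕ × ℕ)).2, (((p.1 : ℕ × ℕ)).1, ((p.2 : ℕ × ℕ)).1))) ?_ ?_ ?_
  · intro p hp
    rw [colPairs, Finset.mem_filter, Finset.mem_offDiag] at hp
    obtain ⟨⟨-, -, hne⟩, hcolp⟩ := hp
    rw [Finset.mem_product, Finset.mem_offDiag]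
    refine ⟨(Finset.mem_product.mp (hmem' p.1)).2,
      (Finset.mem_product.mp (hmem' p.1)).1, (Finset.mem_product.mp (hmem' p.2)).1, ?_⟩
    intro hc
    exact hne (cell_ext hc hcolp)
  · intro p hp p' hp' h
    rw [colPairs, Finset.mem_filter] at hp hp'
    have e1 : ((p.1 : ℕ × ℕ)).2 = ((p'.1 : ℕ × ℕ)).2 := (Prod.ext_iff.mp h).1
    have e2 : ((p.1 : ℕ × ℕ)).1 = ((p'.1 : ℕ × ℕ)).1 :=
      (Prod.ext_iff.mp (Prod.ext_iff.mp h).2).1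
    have e3 : ((p.2 : ℕ × ℕ)).1 = ((p'.2 : ℕ × ℕ)).1 :=
      (Prod.ext_iff.mp (Prod.ext_iff.mp h).2).2
    exact Prod.ext (cell_ext e2 e1) (cell_ext e3 (by rw [← hp.2, ← hp'.2, e1]))
  · intro q hq
    rw [Finset.mem_product, Finset.mem_offDiag] at hq
    obtain ⟨hq1, hqu, hqv, hquv⟩ := hq
    have hmem1 : (q.2.1, q.1) ∈ μ.cells := by
      simp only [hμ, Finset.mem_product]
      exact ⟨hqu, hq1⟩
    have hmem2 : (q.2.2, q.1) ∈ μ.cells := by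
      simp only [hμ, Finset.mem_product]
      exact ⟨hqv, hq1⟩
    refine ⟨(⟨_, hmem1⟩, ⟨_, hmem2⟩), ?_, rfl⟩
    rw [colPairs, Finset.mem_filter, Finset.mem_offDiag]
    exact ⟨⟨Finset.mem_univ _, Finset.mem_univ _, fun hc => hquv (congrArg
      (fun u : μ.cells => (u : ℕ × ℕ).1) hc)⟩, rfl⟩

lemma card_cells_eq {l₁ m₁ : ℕ} (hμ : μ.cells = Finset.range l₁ ×ˢ Finset.range m₁) :
    Fintype.card μ.cells = l₁ * m₁ := by
  rw [Fintype.card_coe, hμ, Finset.card_product, Finset.card_range, Finset.card_range]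

lemma conj_swap_sum {l₁ m₁ : ℕ} (hμ : μ.cells = Finset.range l₁ ×ˢ Finset.range m₁)
    {a b : μ.cells} (hab : a ≠ b) :
    ∑ h : Equiv.Perm μ.cells, (youngSymmetrizer μ).coeff (h⁻¹ * (Equiv.swap a b)⁻¹ * h) =
      ((Finset.univ.filter fun h : Equiv.Perm μ.cells => h a = a ∧ h b = b).card : ℂ) *
        (((rowPairs μ).card : ℂ) - ((colPairs μ).card : ℂ)) := by
  set cnt := (Finset.univ.filter fun h : Equiv.Perm μ.cells => h a = a ∧ h b = b).card with hcnt
  have step1 : ∀ h : Equiv.Perm μ.cells,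
      (youngSymmetrizer μ).coeff (h⁻¹ * (Equiv.swap a b)⁻¹ * h) =
      (if ((h⁻¹ a : μ.cells) : ℕ × ℕ).1 = ((h⁻¹ b : μ.cells) : ℕ × ℕ).1 then 1 else 0) -
      (if ((h⁻¹ a : μ.cells) : ℕ × ℕ).2 = ((h⁻¹ b : μ.cells) : ℕ × ℕ).2 then 1 else 0) := by
    intro h
    have hne : h⁻¹ a ≠ h⁻¹ b := fun hc => hab (h⁻¹.injective hc)
    rw [Equiv.swap_inv]
    rw [show h⁻¹ * Equiv.swap a b * h = Equiv.swap (h⁻¹ a) (h⁻¹ b) by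
      rw [Equiv.swap_apply_apply]; group]
    exact young_coeff_swap hne
  rw [Finset.sum_congr rfl fun h _ => step1 h]
  set F : μ.cells × μ.cells → ℂ := fun p =>
    (if ((p.1 : ℕ × ℕ)).1 = ((p.2 : ℕ × ℕ)).1 then 1 else 0) -
    (if ((p.1 : ℕ × ℕ)).2 = ((p.2 : ℕ × ℕ)).2 then 1 else 0) with hF
  have step2 : ∑ h : Equiv.Perm μ.cells, F (h⁻¹ a, h⁻¹ b) = ∑ h : Equiv.Perm μ.cells,
      F (h a, h b) := by
    exact Equiv.sum_comp (Equiv.inv (Equiv.Perm μ.cells)) (fun h => F (h a, h b))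
  have step3 : ∑ h : Equiv.Perm μ.cells, F (h a, h b) =
      ∑ p ∈ Finset.univ.offDiag,
        ((Finset.univ.filter fun h : Equiv.Perm μ.cells => (h a, h b) = p).card : ℂ) * F p := by
    rw [← Finset.sum_fiberwise_of_maps_to (g := fun h : Equiv.Perm μ.cells => (h a, h b))
      (t := (Finset.univ : Finset μ.cells).offDiag)
      (fun h _ => Finset.mem_offDiag.mpr
        ⟨Finset.mem_univ _, Finset.mem_univ _, fun hc => hab (h.injective hc)⟩)
      (fun h => F (h a, h b))]
    refine Finset.sum_congr rfl fun p hp => ?_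
    have hin : ∀ h ∈ Finset.univ.filter (fun h : Equiv.Perm μ.cells => (h a, h b) = p),
        F (h a, h b) = F p := fun h hh => by rw [(Finset.mem_filter.mp hh).2]
    rw [Finset.sum_congr rfl hin, Finset.sum_const, nsmul_eq_mul]
  have step4 : ∀ p ∈ (Finset.univ : Finset μ.cells).offDiag,
      (Finset.univ.filter fun h : Equiv.Perm μ.cells => (h a, h b) = p).card = cnt := by
    intro p hp
    rw [Finset.mem_offDiag] at hp
    rw [Finset.filter_congr (fun h _ => (Prod.ext_iff :
      ((h a, h b) = p) ↔ (h a = p.1 ∧ h b = p.2)))]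
    exact fiber_card_const hab hp.2.2
  calc ∑ h : Equiv.Perm μ.cells, F (h⁻¹ a, h⁻¹ b)
      = ∑ p ∈ Finset.univ.offDiag, (cnt : ℂ) * F p := by
        rw [step2, step3]
        exact Finset.sum_congr rfl fun p hp => by rw [step4 p hp]
    _ = (cnt : ℂ) * ∑ p ∈ Finset.univ.offDiag, F p := by rw [Finset.mul_sum]
    _ = (cnt : ℂ) * (((rowPairs μ).card : ℂ) - ((colPairs μ).card : ℂ)) := by
        congr 1
        rw [hF]
        rw [Finset.sum_sub_distrib]
        rw [Finset.sum_boole, Finset.sum_boole]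
        rw [rowPairs, colPairs]

lemma card_perm_eq {a b : μ.cells} (hab : a ≠ b) :
    Fintype.card (Equiv.Perm μ.cells) =
      (Finset.univ.filter fun h : Equiv.Perm μ.cells => h a = a ∧ h b = b).card *
        (Finset.univ : Finset μ.cells).offDiag.card := by
  have h1 : Finset.univ.card = ∑ p ∈ (Finset.univ : Finset μ.cells).offDiag,
      (Finset.univ.filter fun h : Equiv.Perm μ.cells => (h a, h b) = p).card :=
    Finset.card_eq_sum_card_fiberwise
      (fun h _ => Finset.mem_offDiag.mpr
        ⟨Finset.mem_univ _, Finset.mem_univ _, fun hc => hab (h.injective hc)⟩)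
  have h2 : ∀ p ∈ (Finset.univ : Finset μ.cells).offDiag,
      (Finset.univ.filter fun h : Equiv.Perm μ.cells => (h a, h b) = p).card =
      (Finset.univ.filter fun h : Equiv.Perm μ.cells => h a = a ∧ h b = b).card := by
    intro p hp
    rw [Finset.mem_offDiag] at hp
    rw [Finset.filter_congr (fun h _ => (Prod.ext_iff :
      ((h a, h b) = p) ↔ (h a = p.1 ∧ h b = p.2)))]
    exact fiber_card_const hab hp.2.2
  rw [← Finset.card_univ, h1, Finset.sum_congr rfl h2, Finset.sum_const, smul_eq_mul,
    mul_comm]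

lemma spechtAction_one : spechtAction μ 1 = LinearMap.id := by
  refine LinearMap.ext fun v => Subtype.ext ?_
  show MonoidAlgebra.single (1 : Equiv.Perm μ.cells) (1 : ℂ) * v.1 = v.1
  rw [← MonoidAlgebra.one_def, one_mul]

lemma finrank_relation {l₁ m₁ : ℕ} (hμ : μ.cells = Finset.range l₁ ×ˢ Finset.range m₁) :
    (Module.finrank ℂ (spechtSubspace μ) : ℂ) =
      ((youngSymmetrizer μ * youngSymmetrizer μ).coeff (1 : Equiv.Perm μ.cells))⁻¹ *
        (Fintype.card (Equiv.Perm μ.cells) : ℂ) := by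
  have key := trace_spechtAction hμ 1
  rw [spechtAction_one, LinearMap.trace_id] at key
  rw [key]
  congr 1
  rw [Finset.sum_congr rfl (fun h _ => by
    rw [show h⁻¹ * (1 : Equiv.Perm μ.cells)⁻¹ * h = 1 by group, young_coeff_one])]
  rw [Finset.sum_const, nsmul_eq_mul, mul_one, Finset.card_univ]

lemma trace_specht_swap {l₁ m₁ : ℕ} (hμ : μ.cells = Finset.range l₁ ×ˢ Finset.range m₁)
    {a b : μ.cells} (hab : a ≠ b) :
    LinearMap.trace ℂ (spechtSubspace μ) (spechtAction μ (Equiv.swap a b)) =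
      ((m₁ : ℂ) - (l₁ : ℂ)) / ((l₁ * m₁ : ℂ) - 1) *
        (Module.finrank ℂ (spechtSubspace μ) : ℂ) := by
  have hN : 2 ≤ l₁ * m₁ := by
    have h1 := Fintype.one_lt_card_iff.mpr ⟨a, b, hab⟩
    rw [card_cells_eq hμ] at h1
    omega
  have hl : 0 < l₁ := by by_contra h; push_neg at h; interval_cases l₁ <;> omega
  have hm : 0 < m₁ := by nlinarith
  have hNC : ((l₁ * m₁ : ℂ) - 1) ≠ 0 := by
    have : ((l₁ : ℂ) * m₁) = ((l₁ * m₁ : ℕ) : ℂ) := by push_cast; ring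
    rw [sub_ne_zero, this]
    intro hcon
    have : (l₁ * m₁ : ℕ) = 1 := by exact_mod_cast hcon
    omega
  have key := trace_spechtAction hμ (Equiv.swap a b)
  rw [conj_swap_sum hμ hab] at key
  rw [key]
  have hD := finrank_relation hμ
  have hG : (Fintype.card (Equiv.Perm μ.cells) : ℂ) =
      ((Finset.univ.filter fun h : Equiv.Perm μ.cells => h a = a ∧ h b = b).card : ℂ) *
        ((Finset.univ : Finset μ.cells).offDiag.card : ℂ) := by
    exact_mod_cast congrArg (Nat.cast : ℕ → ℂ) (card_perm_eq hab)
  have hoff : (((Finset.univ : Finset μ.cells).offDiag.card : ℕ) : ℂ) =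
      ((l₁ * m₁ : ℂ)) * ((l₁ * m₁ : ℂ) - 1) := by
    rw [Finset.offDiag_card, Finset.card_univ, card_cells_eq hμ]
    have hle : l₁ * m₁ ≤ (l₁ * m₁) * (l₁ * m₁) := Nat.le_mul_of_pos_left _ (by positivity)
    rw [Nat.cast_sub hle]
    push_cast
    ring
  have hR : (((rowPairs μ).card : ℕ) : ℂ) = (l₁ : ℂ) * ((m₁ : ℂ) * m₁ - m₁) := by
    rw [card_rowPairs hμ]
    have hle : m₁ ≤ m₁ * m₁ := Nat.le_mul_of_pos_left _ hm
    rw [Nat.cast_mul, Nat.cast_sub hle]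
    push_cast
    ring
  have hC : (((colPairs μ).card : ℕ) : ℂ) = (m₁ : ℂ) * ((l₁ : ℂ) * l₁ - l₁) := by
    rw [card_colPairs hμ]
    have hle : l₁ ≤ l₁ * l₁ := Nat.le_mul_of_pos_left _ hl
    rw [Nat.cast_mul, Nat.cast_sub hle]
    push_cast
    ring
  rw [hR, hC, hD, hG, hoff]
  have hκ := young_kappa_ne hμ
  field_simp [hκ, hNC]
  ring

end SpechtAux

open scoped TensorProduct

noncomputable section

variable {ι : Type*} [Fintype ι] [DecidableEq ι]
variable {Y : Type*} [AddCommGroup Y] [Module ℂ Y]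
variable {κ : Type*} [Fintype κ] [DecidableEq κ]

/-- coordinate map for the pi tensor power -/
def tpCoord (e : Module.Basis κ ℂ Y) : (⨂[ℂ] _l : ι, Y) →ₗ[ℂ] ((ι → κ) →₀ ℂ) :=
  PiTensorProduct.lift
    (∑ f : ι → κ, (Finsupp.lsingle f).compMultilinearMap
      ((MultilinearMap.mkPiAlgebra ℂ ι ℂ).compLinearMap (fun i => e.coord (f i))))

lemma tpCoord_tprod (e : Module.Basis κ ℂ Y) (y : ι → Y) :
    tpCoord e (PiTensorProduct.tprod ℂ y)
      = ∑ f : ι → κ, Finsupp.single f (∏ i, e.repr (y i) (f i)) := by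
  simp [tpCoord, MultilinearMap.mkPiAlgebra, Module.Basis.coord]

def tpOf (e : Module.Basis κ ℂ Y) : ((ι → κ) →₀ ℂ) →ₗ[ℂ] (⨂[ℂ] _l : ι, Y) :=
  Finsupp.linearCombination ℂ (fun f : ι → κ => PiTensorProduct.tprod ℂ (fun i => e (f i)))

lemma tprod_eq_sum (e : Module.Basis κ ℂ Y) (y : ι → Y) :
    PiTensorProduct.tprod ℂ y
      = ∑ f : ι → κ, (∏ i, e.repr (y i) (f i)) • PiTensorProduct.tprod ℂ (fun i => e (f i)) := by
  conv_lhs => rw [show y = fun i => ∑ k : κ, e.repr (y i) k • e k by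
    funext i; rw [Module.Basis.sum_repr]]
  rw [MultilinearMap.map_sum (PiTensorProduct.tprod ℂ) (fun i k => e.repr (y i) k • e k)]
  exact Finset.sum_congr rfl fun f _ => MultilinearMap.map_smul_univ _ _ _

lemma prod_repr_basis (e : Module.Basis κ ℂ Y) (f g : ι → κ) :
    (∏ i, e.repr (e (f i)) (g i)) = if g = f then (1:ℂ) else 0 := by
  by_cases h : g = f
  · subst h; simp
  · rw [if_neg h]
    obtain ⟨i, hi⟩ := Function.ne_iff.mp h
    refine Finset.prod_eq_zero (Finset.mem_univ i) ?_
    rw [Module.Basis.repr_self, Finsupp.single_apply, if_neg (fun hh => hi hh.symm)]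

/-- the equivalence -/
def tpEquiv (e : Module.Basis κ ℂ Y) : (⨂[ℂ] _l : ι, Y) ≃ₗ[ℂ] ((ι → κ) →₀ ℂ) :=
  LinearEquiv.ofLinear (tpCoord e) (tpOf e)
    (by
      refine Finsupp.lhom_ext fun f c => ?_
      simp only [LinearMap.comp_apply, LinearMap.id_apply]
      rw [show (Finsupp.single f c : (ι → κ) →₀ ℂ) = c • Finsupp.single f 1 by
        rw [Finsupp.smul_single, smul_eq_mul, mul_one]]
      rw [map_smul, map_smul]
      congr 1
      rw [tpOf]
      simp only [Finsupp.linearCombination_single, one_smul]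
      rw [tpCoord_tprod]
      rw [Finset.sum_congr rfl fun g _ => by rw [prod_repr_basis e f g]]
      rw [Finset.sum_eq_single f (fun g _ hg => by rw [if_neg hg, Finsupp.single_zero])
        (by simp), if_pos rfl])
    (by
      refine PiTensorProduct.ext ?_
      ext y
      simp only [LinearMap.compMultilinearMap_apply, LinearMap.comp_apply, LinearMap.id_apply]
      rw [tpCoord_tprod, map_sum]
      simp only [tpOf, Finsupp.linearCombination_single]
      rw [← tprod_eq_sum])

lemma trace_eq_sum_diag (e : Module.Basis κ ℂ Y) (Φ : (⨂[ℂ] _l : ι, Y) →ₗ[ℂ] (⨂[ℂ] _l : ι, Y)) :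
    LinearMap.trace ℂ _ Φ
      = ∑ f : ι → κ, tpCoord e (Φ (PiTensorProduct.tprod ℂ (fun i => e (f i)))) f := by
  rw [← LinearMap.trace_conj' Φ (tpEquiv e)]
  rw [LinearMap.trace_eq_matrix_trace ℂ (Finsupp.basisSingleOne : Module.Basis (ι → κ) ℂ _)]
  rw [Matrix.trace]
  refine Finset.sum_congr rfl fun f _ => ?_
  rw [Matrix.diag_apply, LinearMap.toMatrix_apply]
  have h1 : (tpEquiv e).symm (Finsupp.single f 1) = PiTensorProduct.tprod ℂ (fun i => e (f i)) := by
    rw [tpEquiv, LinearEquiv.ofLinear_symm_apply]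
    simp [tpOf]
  simp only [Finsupp.coe_basisSingleOne, Finsupp.basisSingleOne_repr, LinearEquiv.refl_apply,
    LinearEquiv.conj_apply, LinearMap.comp_apply, LinearEquiv.coe_coe, h1]
  rw [tpEquiv, LinearEquiv.ofLinear_apply]

omit [DecidableEq κ] in
lemma sum_swap_pair {G : κ → κ → ℂ} (a b : ι) (hab : a ≠ b) :
    ∑ f : ι → κ, G (f a) (f b)
      = (Fintype.card κ : ℂ) ^ (Fintype.card ι - 2) * ∑ x : κ, ∑ y : κ, G x y := by
  classical
  rw [← Equiv.sum_comp (Equiv.funSplitAt a κ).symm (fun f => G (f a) (f b))]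
  rw [Fintype.sum_prod_type]
  have hb : b ≠ a := hab.symm
  have h1 : ∀ (x : κ) (h : {j // j ≠ a} → κ), (Equiv.funSplitAt a κ).symm (x, h) a = x := by
    intro x h; simp [Equiv.funSplitAt, Equiv.piSplitAt]
  have h2 : ∀ (x : κ) (h : {j // j ≠ a} → κ),
      (Equiv.funSplitAt a κ).symm (x, h) b = h ⟨b, hb⟩ := by
    intro x h; simp [Equiv.funSplitAt, Equiv.piSplitAt, hb]
  simp only [h1, h2]
  have key : ∀ x : κ, ∑ h : {j // j ≠ a} → κ, G x (h ⟨b, hb⟩)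
      = (Fintype.card κ : ℂ) ^ (Fintype.card ι - 2) * ∑ y : κ, G x y := by
    intro x
    rw [← Equiv.sum_comp (Equiv.funSplitAt (⟨b, hb⟩ : {j // j ≠ a}) κ).symm
      (fun h => G x (h ⟨b, hb⟩))]
    rw [Fintype.sum_prod_type]
    have h3 : ∀ (y : κ) (r : {j : {j // j ≠ a} // j ≠ ⟨b, hb⟩} → κ),
        (Equiv.funSplitAt (⟨b, hb⟩ : {j // j ≠ a}) κ).symm (y, r) ⟨b, hb⟩ = y := by
      intro y r; simp [Equiv.funSplitAt, Equiv.piSplitAt]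
    simp only [h3, Finset.sum_const, Finset.card_univ, nsmul_eq_mul]
    have hc1 : Fintype.card { j : {j // j ≠ a} // j ≠ ⟨b, hb⟩ } = Fintype.card ι - 2 := by
      rw [Fintype.card_subtype_compl, Fintype.card_subtype_eq]
      rw [Fintype.card_subtype_compl, Fintype.card_subtype_eq]
      omega
    rw [Fintype.card_fun, hc1, ← Finset.mul_sum]
    push_cast
    ring
  rw [Finset.sum_congr rfl fun x _ => key x, ← Finset.mul_sum]

lemma trace_pitensor_swap {Γ : Type*} [Group Γ] (ρY : Representation ℂ Γ Y)
    (e : Module.Basis κ ℂ Y) (a b : ι) (hab : a ≠ b) (γ : Γ) :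
    LinearMap.trace ℂ _
      ((PiTensorProduct.map fun l => ρY (if l = a then γ else if l = b then γ⁻¹ else 1)) ∘ₗ
        (PiTensorProduct.reindex ℂ (fun _ : ι => Y) (Equiv.swap a b)).toLinearMap) =
      (Fintype.card κ : ℂ) ^ (Fintype.card ι - 1) := by
  rw [trace_eq_sum_diag e]
  have step : ∀ f : ι → κ,
      tpCoord e
        (((PiTensorProduct.map fun l =>
            ρY (if l = a then γ else if l = b then γ⁻¹ else 1)) ∘ₗ
          (PiTensorProduct.reindex ℂ (fun _ : ι => Y) (Equiv.swap a b)).toLinearMap)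
          (PiTensorProduct.tprod ℂ (fun i => e (f i)))) f
      = (fun x y => (e.repr (ρY γ (e y)) x) * (e.repr (ρY γ⁻¹ (e x)) y)) (f a) (f b) := by
    intro f
    rw [LinearMap.comp_apply, LinearEquiv.coe_toLinearMap, PiTensorProduct.reindex_tprod,
      PiTensorProduct.map_tprod, tpCoord_tprod, Finset.sum_apply']
    rw [Finset.sum_eq_single f (fun g _ hg => by rw [Finsupp.single_apply, if_neg hg])
      (fun h => absurd (Finset.mem_univ f) h)]
    rw [Finsupp.single_apply, if_pos rfl]
    simp only [Equiv.symm_swap]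
    have hterm : ∀ i : ι, i ∈ Finset.univ → i ∉ ({a, b} : Finset ι) →
        e.repr (ρY (if i = a then γ else if i = b then γ⁻¹ else 1)
          (e (f (Equiv.swap a b i)))) (f i) = 1 := by
      intro i _ hi
      simp only [Finset.mem_insert, Finset.mem_singleton] at hi
      push_neg at hi
      rw [if_neg hi.1, if_neg hi.2, Equiv.swap_apply_of_ne_of_ne hi.1 hi.2, map_one]
      simp
    rw [← Finset.prod_subset (Finset.subset_univ ({a, b} : Finset ι)) hterm]
    rw [Finset.prod_pair hab]
    simp [Equiv.swap_apply_left, Equiv.swap_apply_right, hab.symm]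
  rw [Finset.sum_congr rfl fun f _ => step f]
  rw [sum_swap_pair (G := fun x y => (e.repr (ρY γ (e y)) x) * (e.repr (ρY γ⁻¹ (e x)) y)) a b hab]
  have inner : ∀ x : κ,
      (∑ y : κ, (e.repr (ρY γ (e y)) x) * (e.repr (ρY γ⁻¹ (e x)) y)) = 1 := by
    intro x
    calc ∑ y : κ, (e.repr (ρY γ (e y)) x) * (e.repr (ρY γ⁻¹ (e x)) y)
        = e.repr (ρY γ (∑ y : κ, e.repr (ρY γ⁻¹ (e x)) y • e y)) x := by
          rw [map_sum, map_sum, Finset.sum_apply']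
          refine Finset.sum_congr rfl fun y _ => ?_
          rw [map_smul, map_smul, Finsupp.smul_apply, smul_eq_mul, mul_comm]
      _ = 1 := by
          rw [Module.Basis.sum_repr, ← Module.End.mul_apply, ← map_mul, mul_inv_cancel, map_one,
            Module.End.one_apply, Module.Basis.repr_self, Finsupp.single_eq_same]
  rw [Finset.sum_congr rfl fun x _ => inner x]
  rw [Finset.sum_const, Finset.card_univ, nsmul_eq_mul, mul_one]
  have h2 : 2 ≤ Fintype.card ι := Fintype.one_lt_card_iff.mpr ⟨a, b, hab⟩
  rw [← pow_succ]
  congr 1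
  omega

end


open scoped Classical in
/-- Let `W₁` be the irreducible representation of `S_{N₁}` whose Young diagram is an
`l₁ × m₁` rectangle (`N₁ = l₁ m₁`), `Y₁` a finite-dimensional `Γ`-representation, and
`s_{1j}` a transposition (here `Equiv.swap a b` of two distinct cells). Then
`Tr_{W₁ ⊗ Y₁^{⊗N₁}}(s_{1j} γ_1 γ_j⁻¹)
  = ((m₁ - l₁)/(N₁ - 1)) · dim W₁ · (dim Y₁)^{N₁ - 1}` for every `γ ∈ Γ`, where
`S_{N₁}` acts on `W₁` and simultaneously permutes the tensor factors of `Y₁^{⊗N₁}` and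
`Γ^{N₁}` acts factorwise. -/
theorem trace_swap_rectangle_wreath (μ : YoungDiagram) (l₁ m₁ : ℕ)
    (hμ : μ.cells = Finset.range l₁ ×ˢ Finset.range m₁)
    {Γ : Type*} [Group Γ] [Finite Γ]
    {W Y : Type} [AddCommGroup W] [Module ℂ W] [FiniteDimensional ℂ W]
    [AddCommGroup Y] [Module ℂ Y] [FiniteDimensional ℂ Y]
    (ρW : Representation ℂ (Equiv.Perm μ.cells) W) (hW : RepIso ρW (spechtRep μ))
    (ρY : Representation ℂ Γ Y)
    (a b : μ.cells) (hab : a ≠ b) (γ : Γ) :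
    LinearMap.trace ℂ _
        (wreathTensorAction ρW ρY
          (fun l => if l = a then γ else if l = b then γ⁻¹ else 1) (Equiv.swap a b)) =
      (((m₁ : ℂ) - (l₁ : ℂ)) / ((l₁ * m₁ : ℂ) - 1)) * (Module.finrank ℂ W : ℂ) *
        (Module.finrank ℂ Y : ℂ) ^ (l₁ * m₁ - 1) := by
  obtain ⟨e, he⟩ := hW
  set eY : Module.Basis (Fin (Module.finrank ℂ Y)) ℂ Y := Module.finBasis ℂ Y with heY
  haveI : Module.Finite ℂ (⨂[ℂ] _l : μ.cells, Y) := Module.Finite.equiv (tpEquiv eY).symm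
  haveI : Module.Free ℂ (⨂[ℂ] _l : μ.cells, Y) := Module.Free.of_equiv (tpEquiv eY).symm
  rw [wreathTensorAction, LinearMap.trace_tensorProduct']
  have htens := trace_pitensor_swap (ι := μ.cells) ρY eY a b hab γ
  rw [htens]
  have htrW : LinearMap.trace ℂ W (ρW (Equiv.swap a b)) =
      ((m₁ : ℂ) - (l₁ : ℂ)) / ((l₁ * m₁ : ℂ) - 1) * (Module.finrank ℂ W : ℂ) := by
    have hcj : e.conj (ρW (Equiv.swap a b)) = spechtAction μ (Equiv.swap a b) := by
      refine LinearMap.ext fun x => ?_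
      rw [LinearEquiv.conj_apply]
      simp only [LinearMap.comp_apply, LinearEquiv.coe_coe]
      rw [he (Equiv.swap a b) (e.symm x), e.apply_symm_apply]
      rfl
    rw [← LinearMap.trace_conj' (ρW (Equiv.swap a b)) e, hcj,
      SpechtAux.trace_specht_swap hμ hab, ← e.finrank_eq]
  rw [htrW, Fintype.card_fin, SpechtAux.card_cells_eq hμ]
end
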